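/- Let 𝒟 be a dyadic grid on ℝⁿ, let α ∈ (0,1], γ = α/(2(2n+α)), and fix an integer r ≥ 1. Let I, J ∈ 𝒟 and let K ∈ 𝒟 be good, with ℓ(K) ≤ ℓ(I) = 2ℓ(J) ≤ 2^r ℓ(K) and max(d(K,I), d(K,J)) ≤ ℓ(K)^γ ℓ(J)^{1−γ}. Then the r-th dyadic ancestor Q = K^{(r)} satisfies I ∪ J ∪ K ⊂ Q and ℓ(Q) = 2^r ℓ(K). -/
import Mathlib


open MeasureTheory Set
open scoped ENNReal NNReal Classical

noncomputable section

namespace Bilinear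

/-- Points of `ℝⁿ`, equipped with the `ℓ^∞` (sup) metric. -/
abbrev E (n : ℕ) : Type := Fin n → ℝ

/-- An axis-parallel cube in `ℝⁿ`, described by its lower corner and its side length. -/
structure Cube (n : ℕ) where
  corner : Fin n → ℝ
  side : ℝ
  side_pos : 0 < side

namespace Cube

variable {n : ℕ}

/-- The (half-open) cube as a subset of `ℝⁿ`. -/
def set (Q : Cube n) : Set (E n) :=
  {x | ∀ i, Q.corner i ≤ x i ∧ x i < Q.corner i + Q.side}

/-- The closed cube as a subset of `ℝⁿ`. -/
def clSet (Q : Cube n) : Set (E n) :=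
  {x | ∀ i, Q.corner i ≤ x i ∧ x i ≤ Q.corner i + Q.side}

/-- The volume `|Q| = ℓ(Q)ⁿ` of a cube. -/
def vol (Q : Cube n) : ℝ := Q.side ^ n

/-- The center of a cube. -/
def center (Q : Cube n) : E n := fun i => Q.corner i + Q.side / 2

/-- The concentric dilate `cQ` of a cube (defined for `c ≥ 1`; junk otherwise). -/
def dilate (Q : Cube n) (c : ℝ) : Cube n where
  corner := fun i => Q.corner i + Q.side / 2 - max c 1 * Q.side / 2
  side := max c 1 * Q.side
  side_pos := mul_pos (lt_of_lt_of_le one_pos (le_max_right c 1)) Q.side_pos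

end Cube

/-- The (`ℓ^∞`) distance between two sets of `ℝⁿ`. -/
def setDist {n : ℕ} (s t : Set (E n)) : ℝ := sInf (Set.image2 dist s t)

/-- The (`ℓ^∞`) distance between two cubes. -/
def cubeDist {n : ℕ} (Q R : Cube n) : ℝ := setDist Q.clSet R.clSet

/-- The indicator function `1_Q` of a cube, as a complex-valued function. -/
def indC {n : ℕ} (Q : Cube n) : E n → ℂ := fun x => if x ∈ Q.set then 1 else 0

/-- The average `⟨|f|⟩_Q` of `|f|` over a cube. -/
def avgAbs {n : ℕ} (Q : Cube n) (f : E n → ℂ) : ℝ := Q.vol⁻¹ * ∫ x in Q.set, ‖f x‖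

/-- The average `⟨f⟩_Q` of `f` over a cube. -/
def avg {n : ℕ} (Q : Cube n) (f : E n → ℂ) : ℂ := (Q.vol : ℂ)⁻¹ * ∫ x in Q.set, f x

/-- The `L^p` norm (`p` a real exponent) of `f : ℝⁿ → ℂ`. -/
def lpNorm {n : ℕ} (f : E n → ℂ) (p : ℝ) : ℝ := (eLpNorm f (ENNReal.ofReal p) volume).toReal

/-- `f` is bounded, measurable and compactly supported. -/
def BddCompactSupp {n : ℕ} (f : E n → ℂ) : Prop :=
  Measurable f ∧ HasCompactSupport f ∧ ∃ M : ℝ, ∀ x, ‖f x‖ ≤ M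

/-- The pairing `⟨f, g⟩ = ∫ f g`. -/
def pairing {n : ℕ} (f g : E n → ℂ) : ℂ := ∫ x, f x * g x

/-! ### Random dyadic grids -/

/-- The translation `Σ_{j : 2^{-j} < 2^{-k}} 2^{-j} ω^j` of the grid of scale `2^{-k}`. -/
def gridShift {n : ℕ} (ω : ℤ → Fin n → Bool) (k : ℤ) (i : Fin n) : ℝ :=
  ∑' j : {j : ℤ // k < j}, (2 : ℝ) ^ (-(j.1)) * (if ω j.1 i then 1 else 0)

/-- The shifted dyadic grid `𝒟_ω = {I + ω : I ∈ 𝒟₀}`. -/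
def dyadicGrid {n : ℕ} (ω : ℤ → Fin n → Bool) : Set (Cube n) :=
  {Q | ∃ (k : ℤ) (m : Fin n → ℤ), Q.side = (2 : ℝ) ^ (-k) ∧
    ∀ i, Q.corner i = (m i : ℝ) * (2 : ℝ) ^ (-k) + gridShift ω k i}

/-- A dyadic grid is a translate-type grid `𝒟_ω` of the standard grid. -/
def IsDyadicGrid {n : ℕ} (𝒟 : Set (Cube n)) : Prop := ∃ ω, 𝒟 = dyadicGrid ω

/-- A grid has no quadrants if every strictly increasing chain of cubes exhausts `ℝⁿ`;
equivalently, every cube of the grid and every point are contained in a common bigger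
grid cube. -/
def NoQuadrants {n : ℕ} (𝒟 : Set (Cube n)) : Prop :=
  ∀ Q ∈ 𝒟, ∀ x : E n, ∃ R ∈ 𝒟, Q.set ⊆ R.set ∧ x ∈ R.set

/-- A cube `I` of a grid `𝒟` is good (with parameters `r, γ`) if for every `J ∈ 𝒟` with
`ℓ(J) ≥ 2^r ℓ(I)` one has `d(I, ∂J) > ℓ(I)^γ ℓ(J)^(1-γ)`. -/
def IsGood {n : ℕ} (𝒟 : Set (Cube n)) (r : ℕ) (γ : ℝ) (I : Cube n) : Prop :=
  ∀ J ∈ 𝒟, (2 : ℝ) ^ r * I.side ≤ J.side →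
    I.side ^ γ * J.side ^ (1 - γ) < setDist I.clSet (frontier J.set)

/-! ### Haar functions -/

/-- One-dimensional Haar functions on the interval `[a, a+l)`:
noncancellative (`e = false`) and cancellative (`e = true`). -/
def haar1 (a l : ℝ) (e : Bool) (t : ℝ) : ℝ :=
  if a ≤ t ∧ t < a + l then
    if e then (if t < a + l / 2 then l ^ (-(1 : ℝ) / 2) else -(l ^ (-(1 : ℝ) / 2)))
    else l ^ (-(1 : ℝ) / 2)
  else 0

/-- The Haar function `h_Q^η` of a cube `Q ⊂ ℝⁿ`. It is cancellative iff `η ≠ 0`. -/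
def haar {n : ℕ} (Q : Cube n) (η : Fin n → Bool) : E n → ℝ :=
  fun x => ∏ i, haar1 (Q.corner i) Q.side (η i) (x i)

/-- The pairing `⟨f, h_Q^η⟩`. -/
def haarPairing {n : ℕ} (f : E n → ℂ) (Q : Cube n) (η : Fin n → Bool) : ℂ :=
  ∫ x, f x * (haar Q η x : ℂ)

/-! ### Bilinear Calderón–Zygmund kernels and truncated operators -/


/-- `K` is a (measurable) standard bilinear Calderón–Zygmund kernel on `ℝⁿ` with Hölder
exponent `α` and constant `C`: size bound and Hölder bounds in each of the three
variables, away from the diagonal `Δ = {x = y = z}`. -/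
def CZBounds (n : ℕ) (α : ℝ) (K : E n → E n → E n → ℂ) (C : ℝ) : Prop :=
  Measurable (fun p : E n × E n × E n => K p.1 p.2.1 p.2.2) ∧
  (∀ x y z : E n, ¬(x = y ∧ y = z) →
    ‖K x y z‖ ≤ C / (dist x y + dist x z) ^ (2 * n)) ∧
  (∀ x x' y z : E n, ¬(x = y ∧ y = z) → ¬(x' = y ∧ y = z) →
    dist x x' ≤ max (dist x y) (dist x z) / 2 →
    ‖K x y z - K x' y z‖ ≤ C * dist x x' ^ α / (dist x y + dist x z) ^ (2 * (n : ℝ) + α)) ∧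
  (∀ x y y' z : E n, ¬(x = y ∧ y = z) → ¬(x = y' ∧ y' = z) →
    dist y y' ≤ max (dist x y) (dist x z) / 2 →
    ‖K x y z - K x y' z‖ ≤ C * dist y y' ^ α / (dist x y + dist x z) ^ (2 * (n : ℝ) + α)) ∧
  (∀ x y z z' : E n, ¬(x = y ∧ y = z) → ¬(x = y ∧ y = z') →
    dist z z' ≤ max (dist x y) (dist x z) / 2 →
    ‖K x y z - K x y z'‖ ≤ C * dist z z' ^ α / (dist x y + dist x z) ^ (2 * (n : ℝ) + α))

/-- The truncated bilinear singular integral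
`T_ε(f,g)(x) = ∬_{max(|x-y|,|x-z|) > ε} K(x,y,z) f(y) g(z) dy dz`. -/
def truncT {n : ℕ} (K : E n → E n → E n → ℂ) (ε : ℝ) (f g : E n → ℂ) (x : E n) : ℂ :=
  ∫ y, ∫ z, if ε < max (dist x y) (dist x z) then K x y z * f y * g z else 0

/-- The class `𝒜` of smooth truncation profiles: smooth `φ` with values in `[0,1]`,
vanishing on `[0,1/2]`, equal to `1` on `[1,∞)`, and `‖φ'‖_∞ ≤ 10`. -/
def memA (φ : ℝ → ℝ) : Prop :=
  ContDiff ℝ (⊤ : ℕ∞) φ ∧ (∀ t, φ t ∈ Set.Icc (0 : ℝ) 1) ∧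
    (∀ t ≤ (1 : ℝ) / 2, φ t = 0) ∧ (∀ t, (1 : ℝ) ≤ t → φ t = 1) ∧ ∀ t, |deriv φ t| ≤ 10

/-- The smoothly truncated kernel `K_ε^φ(x,y,z) = K(x,y,z) φ((|x-y|+|x-z|)/ε)`. -/
def smoothK {n : ℕ} (K : E n → E n → E n → ℂ) (φ : ℝ → ℝ) (ε : ℝ) :
    E n → E n → E n → ℂ :=
  fun x y z => K x y z * ((φ ((dist x y + dist x z) / ε) : ℝ) : ℂ)

/-- The smoothly truncated operator `T_ε^φ(f,g)(x) = ∬ K_ε^φ(x,y,z) f(y) g(z) dy dz`. -/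
def smoothT {n : ℕ} (K : E n → E n → E n → ℂ) (φ : ℝ → ℝ) (ε : ℝ) (f g : E n → ℂ)
    (x : E n) : ℂ :=
  ∫ y, ∫ z, smoothK K φ ε x y z * f y * g z

/-- The first adjoint kernel, `K^{1*}(x,y,z) = K(y,x,z)`. -/
def adj1 {n : ℕ} (K : E n → E n → E n → ℂ) : E n → E n → E n → ℂ := fun x y z => K y x z

/-- The second adjoint kernel, `K^{2*}(x,y,z) = K(z,y,x)`. -/
def adj2 {n : ℕ} (K : E n → E n → E n → ℂ) : E n → E n → E n → ℂ := fun x y z => K z y x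

/-- `C` is a weak boundedness constant of the bilinear operator `T`:
`|⟨T(1_I,1_I), 1_I⟩| ≤ C |I|` for all cubes `I ⊂ ℝⁿ`. -/
def WBPBound {n : ℕ} (T : (E n → ℂ) → (E n → ℂ) → E n → ℂ) (C : ℝ) : Prop :=
  ∀ Q : Cube n, ‖∫ x in Q.set, T (indC Q) (indC Q) x‖ ≤ C * Q.vol

/-! ### The `BMO` pairings `⟨T_ε(1,1), φ₀⟩` and testing conditions -/

/-- The pairing `⟨T_ε(1,1), φ₀⟩`, defined (for `φ₀` supported in the cube `R`, with mean
zero, and `c ≥ 3` a dilation factor) as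
`⟨T_ε(1_{cR},1_{cR}), φ₀⟩ + ∭ (K(x,y,z) - K(c_R,y,z)) 1_{(cR×cR)ᶜ}(y,z) φ₀(x) dy dz dx`. -/
def bmoPairing {n : ℕ} (K : E n → E n → E n → ℂ) (ε : ℝ) (φ₀ : E n → ℂ) (R : Cube n)
    (c : ℝ) : ℂ :=
  (∫ x, truncT K ε (indC (R.dilate c)) (indC (R.dilate c)) x * φ₀ x) +
    ∫ x, φ₀ x * ∫ y, ∫ z,
      if y ∈ (R.dilate c).set ∧ z ∈ (R.dilate c).set then 0
      else K x y z - K R.center y z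

/-- The pairing `⟨T_ε^{1*}(1,1), φ₀⟩ = ⟨T_ε(φ₀, 1_{cR}), 1_{cR}⟩ + (correction with K^{1*})`. -/
def bmoPairing1 {n : ℕ} (K : E n → E n → E n → ℂ) (ε : ℝ) (φ₀ : E n → ℂ) (R : Cube n)
    (c : ℝ) : ℂ :=
  (∫ x, truncT K ε φ₀ (indC (R.dilate c)) x * indC (R.dilate c) x) +
    ∫ x, φ₀ x * ∫ y, ∫ z,
      if y ∈ (R.dilate c).set ∧ z ∈ (R.dilate c).set then 0
      else adj1 K x y z - adj1 K R.center y z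

/-- The pairing `⟨T_ε^{2*}(1,1), φ₀⟩ = ⟨T_ε(1_{cR}, φ₀), 1_{cR}⟩ + (correction with K^{2*})`. -/
def bmoPairing2 {n : ℕ} (K : E n → E n → E n → ℂ) (ε : ℝ) (φ₀ : E n → ℂ) (R : Cube n)
    (c : ℝ) : ℂ :=
  (∫ x, truncT K ε (indC (R.dilate c)) φ₀ x * indC (R.dilate c) x) +
    ∫ x, φ₀ x * ∫ y, ∫ z,
      if y ∈ (R.dilate c).set ∧ z ∈ (R.dilate c).set then 0
      else adj2 K x y z - adj2 K R.center y z

/-- `B` is an admissible `BMO` bound for `T_ε(1,1)`: `|⟨T_ε(1,1), φ₀⟩| ≤ B |R|`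
over all admissible testing data. -/
def BMOBound {n : ℕ} (K : E n → E n → E n → ℂ) (ε : ℝ) (B : ℝ) : Prop :=
  ∀ (R : Cube n) (φ₀ : E n → ℂ), Measurable φ₀ → Function.support φ₀ ⊆ R.clSet →
    (∀ x, ‖φ₀ x‖ ≤ 1) → (∫ x, φ₀ x) = 0 →
    ∀ c : ℝ, 3 ≤ c → ε < 2⁻¹ * (c - 1) * R.side →
      ‖bmoPairing K ε φ₀ R c‖ ≤ B * R.vol

/-- `B` is an admissible `BMO` bound for `T_ε^{1*}(1,1)`. -/
def BMOBound1 {n : ℕ} (K : E n → E n → E n → ℂ) (ε : ℝ) (B : ℝ) : Prop :=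
  ∀ (R : Cube n) (φ₀ : E n → ℂ), Measurable φ₀ → Function.support φ₀ ⊆ R.clSet →
    (∀ x, ‖φ₀ x‖ ≤ 1) → (∫ x, φ₀ x) = 0 →
    ∀ c : ℝ, 3 ≤ c → ε < 2⁻¹ * (c - 1) * R.side →
      ‖bmoPairing1 K ε φ₀ R c‖ ≤ B * R.vol

/-- `B` is an admissible `BMO` bound for `T_ε^{2*}(1,1)`. -/
def BMOBound2 {n : ℕ} (K : E n → E n → E n → ℂ) (ε : ℝ) (B : ℝ) : Prop :=
  ∀ (R : Cube n) (φ₀ : E n → ℂ), Measurable φ₀ → Function.support φ₀ ⊆ R.clSet →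
    (∀ x, ‖φ₀ x‖ ≤ 1) → (∫ x, φ₀ x) = 0 →
    ∀ c : ℝ, 3 ≤ c → ε < 2⁻¹ * (c - 1) * R.side →
      ‖bmoPairing2 K ε φ₀ R c‖ ≤ B * R.vol

/-! ### Sparse collections -/

/-- A collection `𝒮` of cubes is `η`-sparse: every `Q ∈ 𝒮` carries a major measurable
subset `E_Q ⊆ Q` with `|E_Q| > η |Q|`, the sets `E_Q` being pairwise disjoint. -/
def IsSparse {n : ℕ} (η : ℝ) (𝒮 : Set (Cube n)) : Prop :=
  ∃ Esel : Cube n → Set (E n),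
    (∀ Q ∈ 𝒮, MeasurableSet (Esel Q) ∧ Esel Q ⊆ Q.set ∧
      ENNReal.ofReal (η * Q.vol) < MeasureTheory.volume (Esel Q)) ∧
    𝒮.Pairwise fun Q R => Disjoint (Esel Q) (Esel R)

/-- The sparse form `Λ_𝒮(f₁,f₂,f₃) = Σ_{Q ∈ 𝒮} |Q| ⟨|f₁|⟩_Q ⟨|f₂|⟩_Q ⟨|f₃|⟩_Q`. -/
def sparseForm {n : ℕ} (𝒮 : Set (Cube n)) (f₁ f₂ f₃ : E n → ℂ) : ℝ :=
  ∑' Q : 𝒮, (Q : Cube n).vol * avgAbs Q f₁ * avgAbs Q f₂ * avgAbs Q f₃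

/-! ### Bilinear dyadic shifts and paraproducts, as trilinear forms -/

/-- A trilinear form on functions on `ℝⁿ`. -/
abbrev TriForm (n : ℕ) : Type := (E n → ℂ) → (E n → ℂ) → (E n → ℂ) → ℂ

/-- The index set of a bilinear dyadic shift of complexity `(i,j,k)` in the grid `𝒟`:
tuples of cubes `I, J, K ⊆ Q` of `𝒟` with `ℓ(I) = 2^{-i} ℓ(Q)`, `ℓ(J) = 2^{-j} ℓ(Q)`,
`ℓ(K) = 2^{-k} ℓ(Q)`, together with Haar signatures, `h_K` being cancellative and at most
one of `h_I, h_J` being noncancellative. -/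
structure ShiftIndex (n : ℕ) (𝒟 : Set (Cube n)) (i j k : ℕ) where
  Q : Cube n
  I : Cube n
  J : Cube n
  K : Cube n
  ηf : Fin n → Bool
  ηg : Fin n → Bool
  ηh : Fin n → Bool
  memQ : Q ∈ 𝒟
  memI : I ∈ 𝒟
  memJ : J ∈ 𝒟
  memK : K ∈ 𝒟
  subI : I.set ⊆ Q.set
  subJ : J.set ⊆ Q.set
  subK : K.set ⊆ Q.set
  sideI : I.side = Q.side / 2 ^ i
  sideJ : J.side = Q.side / 2 ^ j
  sideK : K.side = Q.side / 2 ^ k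
  cancel_h : ηh ≠ fun _ => false
  cancel_fg : ¬(ηf = (fun _ => false) ∧ ηg = (fun _ => false))

/-- `Λ` is (the trilinear form of) a cancellative bilinear dyadic shift of complexity
`(i,j,k)` in the grid `𝒟`: `Λ(f,g,h) = Σ α_{I,J,K,Q} ⟨f, h̃_I⟩ ⟨g, h̃_J⟩ ⟨h, h_K⟩`
with `|α_{I,J,K,Q}| ≤ |I|^{1/2} |J|^{1/2} |K|^{1/2} / |Q|²`. -/
def IsShiftForm {n : ℕ} (𝒟 : Set (Cube n)) (i j k : ℕ) (Λ : TriForm n) : Prop :=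
  ∃ α : ShiftIndex n 𝒟 i j k → ℂ,
    (∀ t, ‖α t‖ ≤ Real.sqrt (t.I.vol * t.J.vol * t.K.vol) / t.Q.vol ^ 2) ∧
    ∀ f g h, Λ f g h =
      ∑' t : ShiftIndex n 𝒟 i j k,
        α t * haarPairing f t.I t.ηf * haarPairing g t.J t.ηg * haarPairing h t.K t.ηh

/-- `Λ` is a cancellative bilinear shift of complexity `(i,i,k)` or `(i,i+1,k)` in `𝒟`,
or an adjoint (`⟨S^{1*}(f,g),h⟩ = ⟨S(h,g),f⟩`, `⟨S^{2*}(f,g),h⟩ = ⟨S(f,h),g⟩`) of such. -/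
def IsExtShiftForm {n : ℕ} (𝒟 : Set (Cube n)) (i k : ℕ) (Λ : TriForm n) : Prop :=
  ∃ Λ₀ : TriForm n, (IsShiftForm 𝒟 i i k Λ₀ ∨ IsShiftForm 𝒟 i (i + 1) k Λ₀) ∧
    ((∀ f g h, Λ f g h = Λ₀ f g h) ∨ (∀ f g h, Λ f g h = Λ₀ h g f) ∨
      (∀ f g h, Λ f g h = Λ₀ f h g))

/-- The index set of a bilinear paraproduct in the grid `𝒟`: cubes `K ∈ 𝒟` with a
cancellative Haar signature. -/
structure ParaIndex (n : ℕ) (𝒟 : Set (Cube n)) where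
  K : Cube n
  η : Fin n → Bool
  mem : K ∈ 𝒟
  cancel : η ≠ fun _ => false

/-- `Λ` is (the trilinear form of) a bilinear paraproduct
`Π_β(f,g) = Σ_K β_K ⟨f⟩_K ⟨g⟩_K h_K` in the grid `𝒟`, with coefficients satisfying the
Carleson normalization `Σ_{K ⊆ K₀} |β_K|² ≤ |K₀|` for all `K₀ ∈ 𝒟`. -/
def IsParaForm {n : ℕ} (𝒟 : Set (Cube n)) (Λ : TriForm n) : Prop :=
  ∃ β : ParaIndex n 𝒟 → ℂ,
    (∀ K₀ ∈ 𝒟, (∑' t : {t : ParaIndex n 𝒟 // t.K.set ⊆ K₀.set},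
        ((‖β t.1‖₊ : ℝ≥0∞) ^ 2)) ≤ ENNReal.ofReal K₀.vol) ∧
    ∀ f g h, Λ f g h =
      ∑' t : ParaIndex n 𝒟, β t * avg t.K f * avg t.K g * haarPairing h t.K t.η

/-! ### Auxiliary lemmas for Statement 6 -/

section Aux

variable {n : ℕ}

lemma Cube.corner_mem_clSet (Q : Cube n) : Q.corner ∈ Q.clSet := fun _ =>
  ⟨le_refl _, by linarith [Q.side_pos]⟩

lemma Cube.set_subset_clSet (Q : Cube n) : Q.set ⊆ Q.clSet := fun x hx i =>
  ⟨(hx i).1, (hx i).2.le⟩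

lemma Cube.isClosed_clSet (Q : Cube n) : IsClosed Q.clSet := by
  have h : Q.clSet =
      ⋂ i, (fun x : E n => x i) ⁻¹' (Set.Icc (Q.corner i) (Q.corner i + Q.side)) := by
    ext x; simp [Cube.clSet, Set.mem_iInter, Set.mem_Icc]
  rw [h]
  exact isClosed_iInter fun i => isClosed_Icc.preimage (continuous_apply i)

lemma Cube.clSet_subset_closure (Q : Cube n) : Q.clSet ⊆ closure Q.set := by
  intro x hx
  rw [Metric.mem_closure_iff]
  intro ε hε
  have hs := Q.side_pos
  set t : ℝ := min (ε / (2 * Q.side)) 1 with ht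
  have ht0 : 0 < t := lt_min (by positivity) one_pos
  have ht1 : t ≤ 1 := min_le_right _ _
  refine ⟨fun i => x i + t * (Q.corner i + Q.side / 2 - x i), fun i => ?_, ?_⟩
  · obtain ⟨h1, h2⟩ := hx i
    constructor <;> nlinarith [mul_nonneg (sub_nonneg.2 ht1) (sub_nonneg.2 h1),
      mul_nonneg (sub_nonneg.2 ht1) (sub_nonneg.2 h2)]
  · have hb : dist x (fun i => x i + t * (Q.corner i + Q.side / 2 - x i)) ≤ t * Q.side := by
      rw [dist_pi_le_iff (by positivity)]
      intro i
      rw [Real.dist_eq, abs_le]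
      obtain ⟨h1, h2⟩ := hx i
      constructor <;> nlinarith
    have hle : t ≤ ε / (2 * Q.side) := min_le_left _ _
    have : t * Q.side ≤ ε / 2 := by
      rw [le_div_iff₀ (by positivity)] at hle
      nlinarith
    linarith

lemma Cube.isOpen_openCube (Q : Cube n) :
    IsOpen {x : E n | ∀ i, Q.corner i < x i ∧ x i < Q.corner i + Q.side} := by
  have h : {x : E n | ∀ i, Q.corner i < x i ∧ x i < Q.corner i + Q.side} =
      ⋂ i, (fun x : E n => x i) ⁻¹' (Set.Ioo (Q.corner i) (Q.corner i + Q.side)) := by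
    ext x; simp [Set.mem_iInter, Set.mem_Ioo]
  rw [h]
  exact isOpen_iInter_of_finite fun i => isOpen_Ioo.preimage (continuous_apply i)

lemma Cube.openCube_subset_interior (Q : Cube n) :
    {x : E n | ∀ i, Q.corner i < x i ∧ x i < Q.corner i + Q.side} ⊆ interior Q.set :=
  interior_maximal (fun x hx i => ⟨(hx i).1.le, (hx i).2⟩) Q.isOpen_openCube

lemma Cube.exists_face_of_not_interior (Q : Cube n) {y : E n} (hy : y ∉ interior Q.set) :
    ∃ i, y i ≤ Q.corner i ∨ Q.corner i + Q.side ≤ y i := by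
  by_contra h
  push_neg at h
  exact hy (Q.openCube_subset_interior fun i => ⟨(h i).1, (h i).2⟩)

lemma Cube.update_mem_frontier (Q : Cube n) {x : E n} (hx : x ∈ Q.clSet) (i₀ : Fin n)
    {v : ℝ} (hv : v = Q.corner i₀ ∨ v = Q.corner i₀ + Q.side) :
    Function.update x i₀ v ∈ frontier Q.set := by
  constructor
  · apply Q.clSet_subset_closure
    intro i
    by_cases hi : i = i₀
    · subst hi
      rw [Function.update_self]
      rcases hv with rfl | rfl
      · exact ⟨le_refl _, by linarith [Q.side_pos]⟩
      · exact ⟨by linarith [Q.side_pos], le_refl _⟩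
    · rw [Function.update_of_ne hi]; exact hx i
  · intro hmem
    rcases hv with rfl | rfl
    · rw [mem_interior_iff_mem_nhds, Metric.mem_nhds_iff] at hmem
      obtain ⟨ε, hε, hball⟩ := hmem
      have hmem' : Function.update x i₀ (Q.corner i₀ - ε / 2) ∈
          Metric.ball (Function.update x i₀ (Q.corner i₀)) ε := by
        rw [Metric.mem_ball]
        have hle : dist (Function.update x i₀ (Q.corner i₀ - ε / 2))
            (Function.update x i₀ (Q.corner i₀)) ≤ ε / 2 := by
          rw [dist_pi_le_iff (by positivity)]
          intro i
          by_cases hi : i = i₀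
          · subst hi
            rw [Function.update_self, Function.update_self, Real.dist_eq]
            rw [abs_le]; constructor <;> linarith
          · rw [Function.update_of_ne hi, Function.update_of_ne hi, dist_self]
            positivity
        linarith
      have h1 := (hball hmem' i₀).1
      rw [Function.update_self] at h1
      linarith
    · have h1 := (interior_subset hmem i₀).2
      rw [Function.update_self] at h1
      linarith

lemma Cube.exists_frontier_dist_le (Q : Cube n) {x y : E n}
    (hx : x ∈ Q.clSet) (hy : y ∉ interior Q.set) :
    ∃ w ∈ frontier Q.set, dist x w ≤ dist x y := by
  obtain ⟨i₀, hi₀⟩ := Q.exists_face_of_not_interior hy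
  have hxy : dist (x i₀) (y i₀) ≤ dist x y := dist_le_pi_dist x y i₀
  rw [Real.dist_eq] at hxy
  rcases hi₀ with h | h
  · refine ⟨Function.update x i₀ (Q.corner i₀),
      Q.update_mem_frontier hx i₀ (Or.inl rfl), ?_⟩
    have h1 : dist x (Function.update x i₀ (Q.corner i₀)) ≤ x i₀ - Q.corner i₀ := by
      rw [dist_pi_le_iff (by linarith [(hx i₀).1])]
      intro i
      by_cases hi : i = i₀
      · rw [hi, Function.update_self, Real.dist_eq,
          abs_of_nonneg (by linarith [(hx i₀).1])]
      · rw [Function.update_of_ne hi, dist_self]; linarith [(hx i₀).1]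
    have h2 : x i₀ - Q.corner i₀ ≤ dist x y := by
      have := le_abs_self (x i₀ - y i₀)
      linarith
    linarith
  · refine ⟨Function.update x i₀ (Q.corner i₀ + Q.side),
      Q.update_mem_frontier hx i₀ (Or.inr rfl), ?_⟩
    have h1 : dist x (Function.update x i₀ (Q.corner i₀ + Q.side)) ≤
        Q.corner i₀ + Q.side - x i₀ := by
      rw [dist_pi_le_iff (by linarith [(hx i₀).2])]
      intro i
      by_cases hi : i = i₀
      · rw [hi, Function.update_self, Real.dist_eq,
          abs_of_nonpos (by linarith [(hx i₀).2])]
        linarith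
      · rw [Function.update_of_ne hi, dist_self]; linarith [(hx i₀).2]
    have h2 : Q.corner i₀ + Q.side - x i₀ ≤ dist x y := by
      have := neg_abs_le (x i₀ - y i₀)
      linarith
    linarith

lemma setDist_le {s t : Set (E n)} {x y : E n} (hx : x ∈ s) (hy : y ∈ t) :
    setDist s t ≤ dist x y :=
  csInf_le ⟨0, fun d hd => by
    obtain ⟨a, _, b, _, rfl⟩ := hd; exact dist_nonneg⟩ ⟨x, hx, y, hy, rfl⟩

lemma le_setDist {s t : Set (E n)} (hs : s.Nonempty) (ht : t.Nonempty) {c : ℝ}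
    (h : ∀ x ∈ s, ∀ y ∈ t, c ≤ dist x y) : c ≤ setDist s t := by
  obtain ⟨x, hx⟩ := hs
  obtain ⟨y, hy⟩ := ht
  exact le_csInf ⟨_, ⟨x, hx, y, hy, rfl⟩⟩
    (fun d hd => by obtain ⟨a, ha, b, hb, rfl⟩ := hd; exact h a ha b hb)

/-- The defining series of `gridShift`, reindexed over `ℕ`. -/
lemma gridShift_eq_tsum (ω : ℤ → Fin n → Bool) (k : ℤ) (i : Fin n) :
    gridShift ω k i =
      ∑' m : ℕ, (2 : ℝ) ^ (-(k + 1 + m)) * (if ω (k + 1 + m) i then 1 else 0) := by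
  let e : ℕ ≃ {j : ℤ // k < j} :=
    { toFun := fun m => ⟨k + 1 + m, by omega⟩
      invFun := fun j => (j.1 - (k + 1)).toNat
      left_inv := fun m => by simp
      right_inv := fun j => by
        ext
        have := j.2
        simp only
        omega }
  rw [gridShift,
    ← Equiv.tsum_eq e (fun j : {j : ℤ // k < j} => (2 : ℝ) ^ (-j.1) * (if ω j.1 i then 1 else 0))]
  exact tsum_congr fun m => rfl

lemma summable_gridShift_aux (ω : ℤ → Fin n → Bool) (k : ℤ) (i : Fin n) :
    Summable (fun m : ℕ => (2 : ℝ) ^ (-(k + 1 + m)) * (if ω (k + 1 + m) i then 1 else 0)) := by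
  have hg : Summable (fun m : ℕ => (2 : ℝ) ^ (-(k + 1)) * (2⁻¹ : ℝ) ^ m) :=
    (summable_geometric_of_lt_one (by norm_num) (by norm_num)).mul_left _
  refine Summable.of_nonneg_of_le (fun m => by positivity) (fun m => ?_) hg
  have he : (2 : ℝ) ^ (-(k + 1 + (m : ℤ))) = (2 : ℝ) ^ (-(k + 1)) * (2⁻¹ : ℝ) ^ m := by
    rw [show -(k + 1 + (m : ℤ)) = -(k + 1) + (-(m : ℤ)) by ring, zpow_add₀ (two_ne_zero)]
    congr 1
    rw [zpow_neg, zpow_natCast, inv_pow]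
  rw [he]
  split_ifs
  · rw [mul_one]
  · rw [mul_zero]
    positivity

/-- Relation between the grid shifts at scales `2^(-(k-r))` and `2^(-k)`:
they differ by an integer multiple of `2^(-k)`. -/
lemma gridShift_sub (ω : ℤ → Fin n → Bool) (k : ℤ) (r : ℕ) (i : Fin n) :
    ∃ D : ℤ, gridShift ω (k - r) i = (D : ℝ) * (2 : ℝ) ^ (-k) + gridShift ω k i := by
  classical
  refine ⟨∑ m ∈ Finset.range r, if ω (k - r + 1 + m) i then 2 ^ (r - 1 - m) else 0, ?_⟩
  rw [gridShift_eq_tsum ω (k - r) i, gridShift_eq_tsum ω k i]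
  have hsum := summable_gridShift_aux ω (k - r) i
  rw [← Summable.sum_add_tsum_nat_add r hsum]
  congr 1
  · -- finite part
    rw [Int.cast_sum, Finset.sum_mul]
    apply Finset.sum_congr rfl
    intro m hm
    have hmr : m < r := Finset.mem_range.mp hm
    have hcast : (2 : ℝ) ^ (-(k - r + 1 + (m : ℤ))) =
        ((2 : ℤ) ^ (r - 1 - m) : ℤ) * (2 : ℝ) ^ (-k) := by
      push_cast
      rw [← zpow_natCast (2 : ℝ) (r - 1 - m), ← zpow_add₀ (two_ne_zero : (2 : ℝ) ≠ 0)]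
      congr 1
      omega
    rw [hcast]
    split_ifs <;> push_cast <;> ring
  · -- tail equals the shift at scale k
    apply tsum_congr
    intro m
    have harg : k - r + 1 + ((m + r : ℕ) : ℤ) = k + 1 + m := by push_cast; ring
    rw [harg]

/-- 1D dyadic interval lemma: two dyadic intervals whose left endpoints differ by an
integer multiple of the smaller length are nested once they intersect. -/
lemma int_interval_subset {k l : ℤ} (hlk : l ≤ k) {a b x : ℝ} (t : ℤ)
    (hab : a = b + (t : ℝ) * (2 : ℝ) ^ (-k))
    (h1 : a ≤ x) (h2 : x < a + (2 : ℝ) ^ (-k)) (h3 : b ≤ x) (h4 : x < b + (2 : ℝ) ^ (-l)) :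
    b ≤ a ∧ a + (2 : ℝ) ^ (-k) ≤ b + (2 : ℝ) ^ (-l) := by
  have hk : (0 : ℝ) < (2 : ℝ) ^ (-k) := by positivity
  have h2l : (2 : ℝ) ^ (-l) = (2 : ℝ) ^ ((k - l).toNat) * (2 : ℝ) ^ (-k) := by
    rw [← zpow_natCast (2 : ℝ) ((k - l).toNat), ← zpow_add₀ (two_ne_zero : (2 : ℝ) ≠ 0)]
    congr 1
    omega
  have ht0 : (0 : ℝ) ≤ (t : ℝ) := by
    rcases le_or_gt 0 t with h' | h'
    · exact_mod_cast h'
    · exfalso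
      have ht1 : t ≤ -1 := by omega
      have ht1' : (t : ℝ) ≤ -1 := by exact_mod_cast ht1
      nlinarith
  have htr : (t : ℝ) + 1 ≤ (2 : ℝ) ^ ((k - l).toNat) := by
    by_contra h
    push_neg at h
    have h2 : ((2 : ℤ) ^ ((k - l).toNat) : ℝ) < (t : ℝ) + 1 := by push_cast; exact h
    have h2' : (2 : ℤ) ^ ((k - l).toNat) < t + 1 := by exact_mod_cast h2
    have h3' : (2 : ℤ) ^ ((k - l).toNat) ≤ t := by omega
    have h4' : ((2 : ℤ) ^ ((k - l).toNat) : ℝ) ≤ (t : ℝ) := by exact_mod_cast h3'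
    push_cast at h4'
    nlinarith
  constructor
  · nlinarith
  · nlinarith

/-- Two cubes of a dyadic grid with a common point and comparable sides are nested. -/
lemma dyadic_subset_of_inter (ω : ℤ → Fin n → Bool) {P R : Cube n}
    (hP : P ∈ dyadicGrid ω) (hR : R ∈ dyadicGrid ω) (hside : P.side ≤ R.side)
    {x : E n} (hxP : x ∈ P.set) (hxR : x ∈ R.set) : P.set ⊆ R.set := by
  obtain ⟨k, m, hk, hm⟩ := hP
  obtain ⟨l, m', hl, hm'⟩ := hR
  have hlk : l ≤ k := by
    rw [hk, hl] at hside
    by_contra h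
    push_neg at h
    have := zpow_lt_zpow_right₀ (by norm_num : (1 : ℝ) < 2) (by omega : -l < -k)
    linarith
  intro y hy i
  obtain ⟨D, hgs⟩ := gridShift_sub ω k ((k - l).toNat) i
  have hexp : k - (((k - l).toNat : ℕ) : ℤ) = l := by omega
  rw [hexp] at hgs
  have h2l : (2 : ℝ) ^ (-l) = (2 : ℝ) ^ ((k - l).toNat) * (2 : ℝ) ^ (-k) := by
    rw [← zpow_natCast (2 : ℝ) ((k - l).toNat), ← zpow_add₀ (two_ne_zero : (2 : ℝ) ≠ 0)]
    congr 1
    omega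
  have hab : P.corner i = R.corner i +
      ((m i - m' i * 2 ^ ((k - l).toNat) - D : ℤ) : ℝ) * (2 : ℝ) ^ (-k) := by
    rw [hm, hm', hgs]
    push_cast
    rw [h2l]
    ring
  have hx1 := (hxP i).1
  have hx2 := (hxP i).2
  have hx3 := (hxR i).1
  have hx4 := (hxR i).2
  rw [hk] at hx2
  rw [hl] at hx4
  obtain ⟨key1, key2⟩ := int_interval_subset hlk _ hab hx1 hx2 hx3 hx4
  have hy1 := (hy i).1
  have hy2 := (hy i).2
  rw [hk] at hy2
  rw [hl]
  constructor
  · linarith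
  · linarith

/-- Existence of the `r`-th dyadic ancestor of a grid cube. -/
lemma exists_ancestor (ω : ℤ → Fin n → Bool) {K : Cube n} (hK : K ∈ dyadicGrid ω) (r : ℕ) :
    ∃ Q ∈ dyadicGrid ω, K.set ⊆ Q.set ∧ Q.side = 2 ^ r * K.side := by
  obtain ⟨k, m, hk, hm⟩ := hK
  choose D hD using fun i => gridShift_sub ω k r i
  set N : Fin n → ℤ := fun i => m i - D i with hN
  have hpow : (2 : ℝ) ^ (-(k - (r : ℤ))) = (2 : ℝ) ^ r * (2 : ℝ) ^ (-k) := by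
    rw [← zpow_natCast (2 : ℝ) r, ← zpow_add₀ (two_ne_zero : (2 : ℝ) ≠ 0)]
    congr 1
    ring
  have hkpos : (0 : ℝ) < (2 : ℝ) ^ (-k) := by positivity
  refine ⟨⟨fun i => ((N i / 2 ^ r : ℤ) : ℝ) * (2 : ℝ) ^ (-(k - r)) + gridShift ω (k - r) i,
      (2 : ℝ) ^ (-(k - r)), by positivity⟩,
    ⟨k - r, fun i => N i / 2 ^ r, rfl, fun i => rfl⟩, ?_, ?_⟩
  · intro x hx i
    have hcornerK : K.corner i = (N i : ℝ) * (2 : ℝ) ^ (-k) + gridShift ω (k - r) i := by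
      rw [hm, hD i, hN]
      push_cast
      ring
    have hdm := Int.mul_ediv_add_emod (N i) (2 ^ r)
    have hr0 : (0 : ℤ) ≤ N i % 2 ^ r := Int.emod_nonneg _ (by positivity)
    have hr1 : N i % 2 ^ r < 2 ^ r := Int.emod_lt_of_pos _ (by positivity)
    have hq : ((2 : ℝ) ^ r) * ((N i / 2 ^ r : ℤ) : ℝ) + ((N i % 2 ^ r : ℤ) : ℝ) = (N i : ℝ) := by
      exact_mod_cast congrArg (fun z : ℤ => (z : ℝ)) hdm
    have he0 : (0 : ℝ) ≤ ((N i % 2 ^ r : ℤ) : ℝ) := by exact_mod_cast hr0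
    have he1 : ((N i % 2 ^ r : ℤ) : ℝ) ≤ (2 : ℝ) ^ r - 1 := by
      have : N i % 2 ^ r ≤ 2 ^ r - 1 := by omega
      calc ((N i % 2 ^ r : ℤ) : ℝ) ≤ (((2 : ℤ) ^ r - 1 : ℤ) : ℝ) := by exact_mod_cast this
        _ = (2 : ℝ) ^ r - 1 := by push_cast; ring
    obtain ⟨hx1, hx2⟩ := hx i
    rw [hcornerK] at hx1 hx2
    rw [hk] at hx2
    simp only [Cube.set, Set.mem_setOf_eq]
    constructor
    · rw [hpow]
      nlinarith
    · rw [hpow]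
      nlinarith
  · simp only
    rw [hk, hpow]

end Aux

/-- the `r`-th ancestor works as a common parent in the diagonal part:
if `K` is good, `ℓ(K) ≤ ℓ(I) = 2ℓ(J) ≤ 2^r ℓ(K)` and
`max(d(K,I), d(K,J)) ≤ ℓ(K)^γ ℓ(J)^(1-γ)` with `γ = α/(2(2n+α))`, then the `r`-th dyadic
ancestor `Q = K^{(r)}` (the grid cube containing `K` with `ℓ(Q) = 2^r ℓ(K)`) contains
`I ∪ J ∪ K`. -/
theorem diagonal_part_common_parent (n : ℕ) (hn : 0 < n) (α : ℝ)
    (hα : α ∈ Set.Ioc (0 : ℝ) 1) (r : ℕ) (hr : 1 ≤ r)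
    (ω : ℤ → Fin n → Bool) (I J K : Cube n)
    (hI : I ∈ dyadicGrid ω) (hJ : J ∈ dyadicGrid ω) (hK : K ∈ dyadicGrid ω)
    (hgood : IsGood (dyadicGrid ω) r (α / (2 * (2 * (n : ℝ) + α))) K)
    (h1 : K.side ≤ I.side) (h2 : I.side = 2 * J.side) (h2' : I.side ≤ 2 ^ r * K.side)
    (h3 : max (cubeDist K I) (cubeDist K J) ≤
      K.side ^ (α / (2 * (2 * (n : ℝ) + α))) *
        J.side ^ (1 - α / (2 * (2 * (n : ℝ) + α)))) :
    ∃ Q ∈ dyadicGrid ω, K.set ⊆ Q.set ∧ Q.side = 2 ^ r * K.side ∧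
      I.set ∪ J.set ∪ K.set ⊆ Q.set := by
  obtain ⟨hα0, hα1⟩ := hα
  set γ : ℝ := α / (2 * (2 * (n : ℝ) + α)) with hγ
  have hden : (0 : ℝ) < 2 * (2 * (n : ℝ) + α) := by
    have : (0 : ℝ) ≤ (n : ℝ) := Nat.cast_nonneg n
    nlinarith
  have hγ0 : 0 < γ := div_pos hα0 hden
  have hγ1 : γ < 1 := by
    rw [hγ, div_lt_one hden]
    have : (0 : ℝ) ≤ (n : ℝ) := Nat.cast_nonneg n
    nlinarith
  obtain ⟨Q, hQmem, hKsub, hQside⟩ := exists_ancestor ω hK r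
  have hJpos := J.side_pos
  have hKpos := K.side_pos
  have hJQ : J.side < Q.side := by rw [hQside]; nlinarith
  -- the good-cube separation bound for the ancestor Q
  have hbd := hgood Q hQmem (le_of_eq hQside.symm)
  -- key claim: any grid cube P with side ≤ Q.side that is close to K lies inside Q
  have hKQcl : K.clSet ⊆ Q.clSet := fun x hx =>
    (closure_minimal Q.set_subset_clSet Q.isClosed_clSet)
      ((closure_mono hKsub) (K.clSet_subset_closure hx))
  have key : ∀ P : Cube n, P ∈ dyadicGrid ω → P.side ≤ Q.side →
      cubeDist K P ≤ K.side ^ γ * J.side ^ (1 - γ) → P.set ⊆ Q.set := by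
    intro P hPmem hPside hPdist
    by_cases hne : (P.set ∩ Q.set).Nonempty
    · obtain ⟨x, hx1, hx2⟩ := hne
      exact dyadic_subset_of_inter ω hPmem hQmem hPside hx1 hx2
    · exfalso
      rw [Set.not_nonempty_iff_eq_empty] at hne
      have hTq : K.side ^ γ * Q.side ^ (1 - γ) ≤ cubeDist K P := by
        apply le_setDist ⟨_, K.corner_mem_clSet⟩ ⟨_, P.corner_mem_clSet⟩
        intro x hx y hy
        have hyint : y ∉ interior Q.set := by
          intro hyi
          have hyc : y ∈ closure P.set := P.clSet_subset_closure hy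
          rcases mem_closure_iff.mp hyc _ isOpen_interior hyi with ⟨z, hz1, hz2⟩
          have hz : z ∈ P.set ∩ Q.set := ⟨hz2, interior_subset hz1⟩
          rw [hne] at hz
          exact hz
        obtain ⟨w, hw, hdw⟩ := Q.exists_frontier_dist_le (hKQcl hx) hyint
        calc K.side ^ γ * Q.side ^ (1 - γ)
            ≤ setDist K.clSet (frontier Q.set) := hbd.le
          _ ≤ dist x w := setDist_le hx hw
          _ ≤ dist x y := hdw
      have hTlt : K.side ^ γ * J.side ^ (1 - γ) < K.side ^ γ * Q.side ^ (1 - γ) := by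
        apply mul_lt_mul_of_pos_left
          (Real.rpow_lt_rpow hJpos.le hJQ (by linarith))
          (Real.rpow_pos_of_pos hKpos γ)
      linarith
  have hIs : I.set ⊆ Q.set := by
    apply key I hI (by rw [hQside]; exact h2')
    exact le_trans (le_max_left _ _) h3
  have hJs : J.set ⊆ Q.set := by
    apply key J hJ (by rw [hQside]; nlinarith)
    exact le_trans (le_max_right _ _) h3
  exact ⟨Q, hQmem, hKsub, hQside, Set.union_subset (Set.union_subset hIs hJs) hKsub⟩

end Bilinear
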